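/- arXiv:2002.04725 — 4 statements merged into one kernel-verified Lean document; each statement's English description precedes it below -/
import Mathlib

section
/- There exists a universal constant K0 > 0 such that for every δ ∈ (0, 1) there exists a point x0 with √(max{3/2, 2 log(1/(1−δ))}) < x0 < √(K0 + 2 log(1/(1−δ))) such that the function x ↦ φ(x; δ) is strictly increasing on (0, x0) and strictly decreasing on (x0, ∞). -/
open Real MeasureTheory ProbabilityTheory Filter Topology


/-- The CDF of the standard normal distribution. -/
noncomputable def stdNormalCDF (x : ℝ) : ℝ := cdf (gaussianReal 0 1) x

lemma stdNormalCDF_eq (x : ℝ) :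
    stdNormalCDF x = ∫ t in Set.Iic x, gaussianPDFReal 0 1 t := by
  rw [stdNormalCDF, cdf_eq_real, measureReal_def, gaussianReal_apply_eq_integral 0 one_ne_zero,
    ENNReal.toReal_ofReal]
  exact setIntegral_nonneg measurableSet_Iic fun t _ => gaussianPDFReal_nonneg 0 1 t

lemma continuous_gpdf : Continuous (gaussianPDFReal 0 1) := by
  unfold gaussianPDFReal
  fun_prop

lemma hasDerivAt_stdNormalCDF (x : ℝ) :
    HasDerivAt stdNormalCDF (gaussianPDFReal 0 1 x) x := by
  have hint : Integrable (gaussianPDFReal 0 1) := integrable_gaussianPDFReal 0 1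
  have key : ∀ u, stdNormalCDF u =
      (∫ t in Set.Iic (0:ℝ), gaussianPDFReal 0 1 t) + ∫ t in (0:ℝ)..u, gaussianPDFReal 0 1 t := by
    intro u
    rw [stdNormalCDF_eq, ← intervalIntegral.integral_Iic_sub_Iic hint.integrableOn hint.integrableOn]
    ring
  have hd : HasDerivAt (fun u => (∫ t in Set.Iic (0:ℝ), gaussianPDFReal 0 1 t)
      + ∫ t in (0:ℝ)..u, gaussianPDFReal 0 1 t) (gaussianPDFReal 0 1 x) x := by
    refine HasDerivAt.const_add _ ?_
    exact intervalIntegral.integral_hasDerivAt_right hint.intervalIntegrable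
      continuous_gpdf.stronglyMeasurable.stronglyMeasurableAtFilter
      continuous_gpdf.continuousAt
  have : (fun u => (∫ t in Set.Iic (0:ℝ), gaussianPDFReal 0 1 t)
      + ∫ t in (0:ℝ)..u, gaussianPDFReal 0 1 t) = stdNormalCDF := funext fun u => (key u).symm
  rwa [this] at hd



/-- `phi δ x = 2Φ(x) − Φ(x(1+δ)) − Φ(x(1−δ))`. -/
noncomputable def phi (δ x : ℝ) : ℝ :=
  2 * stdNormalCDF x - stdNormalCDF (x * (1 + δ)) - stdNormalCDF (x * (1 - δ))

/-- auxiliary: the function governing the sign of `phi'`. -/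
noncomputable def hh (δ t : ℝ) : ℝ :=
  2 - (1 + δ) * rexp (-(δ * (2 + δ) / 2) * t) - (1 - δ) * rexp ((δ * (2 - δ) / 2) * t)

lemma hasDerivAt_phi (δ x : ℝ) :
    HasDerivAt (phi δ) (2 * gaussianPDFReal 0 1 x - (1 + δ) * gaussianPDFReal 0 1 (x * (1 + δ))
      - (1 - δ) * gaussianPDFReal 0 1 (x * (1 - δ))) x := by
  have h1 := (hasDerivAt_stdNormalCDF x).const_mul 2
  have h2 : HasDerivAt (fun y : ℝ => stdNormalCDF (y * (1 + δ)))
      (gaussianPDFReal 0 1 (x * (1 + δ)) * (1 + δ)) x :=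
    (hasDerivAt_stdNormalCDF (x * (1 + δ))).comp x (hasDerivAt_mul_const (1 + δ))
  have h3 : HasDerivAt (fun y : ℝ => stdNormalCDF (y * (1 - δ)))
      (gaussianPDFReal 0 1 (x * (1 - δ)) * (1 - δ)) x :=
    (hasDerivAt_stdNormalCDF (x * (1 - δ))).comp x (hasDerivAt_mul_const (1 - δ))
  have := (h1.sub h2).sub h3
  exact this.congr_deriv (by ring)

lemma key_identity (δ x : ℝ) :
    2 * gaussianPDFReal 0 1 x - (1 + δ) * gaussianPDFReal 0 1 (x * (1 + δ))
      - (1 - δ) * gaussianPDFReal 0 1 (x * (1 - δ))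
    = gaussianPDFReal 0 1 x * hh δ (x ^ 2) := by
  simp only [gaussianPDFReal, hh, NNReal.coe_one, mul_one, sub_zero]
  have e1 : rexp (-(x * (1 + δ)) ^ 2 / 2) = rexp (-x ^ 2 / 2) * rexp (-(δ * (2 + δ) / 2) * x ^ 2) := by
    rw [← Real.exp_add]; congr 1; ring
  have e2 : rexp (-(x * (1 - δ)) ^ 2 / 2) = rexp (-x ^ 2 / 2) * rexp ((δ * (2 - δ) / 2) * x ^ 2) := by
    rw [← Real.exp_add]; congr 1; ring
  rw [e1, e2]
  ring

lemma hasDerivAt_hh (δ t : ℝ) :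
    HasDerivAt (hh δ) ((1 + δ) * (δ * (2 + δ) / 2) * rexp (-(δ * (2 + δ) / 2) * t)
      - (1 - δ) * (δ * (2 - δ) / 2) * rexp ((δ * (2 - δ) / 2) * t)) t := by
  have d1 : HasDerivAt (fun t : ℝ => rexp (-(δ * (2 + δ) / 2) * t))
      (rexp (-(δ * (2 + δ) / 2) * t) * (-(δ * (2 + δ) / 2))) t := by
    simpa using ((hasDerivAt_id t).const_mul (-(δ * (2 + δ) / 2))).exp
  have d2 : HasDerivAt (fun t : ℝ => rexp ((δ * (2 - δ) / 2) * t))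
      (rexp ((δ * (2 - δ) / 2) * t) * (δ * (2 - δ) / 2)) t := by
    simpa using ((hasDerivAt_id t).const_mul (δ * (2 - δ) / 2)).exp
  have := ((d1.const_mul (1 + δ)).const_sub 2).sub (d2.const_mul (1 - δ))
  exact this.congr_deriv (by ring)

lemma deriv_hh (δ : ℝ) : deriv (hh δ) = fun t =>
    (1 + δ) * (δ * (2 + δ) / 2) * rexp (-(δ * (2 + δ) / 2) * t)
      - (1 - δ) * (δ * (2 - δ) / 2) * rexp ((δ * (2 - δ) / 2) * t) :=
  funext fun t => (hasDerivAt_hh δ t).deriv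

lemma continuous_hh (δ : ℝ) : Continuous (hh δ) := by
  unfold hh; fun_prop

lemma strictConcaveOn_hh (δ : ℝ) (hδ : δ ∈ Set.Ioo (0:ℝ) 1) :
    StrictConcaveOn ℝ Set.univ (hh δ) := by
  obtain ⟨hδ0, hδ1⟩ := hδ
  refine strictConcaveOn_of_deriv2_neg' convex_univ (continuous_hh δ).continuousOn ?_
  intro t _
  show deriv (deriv (hh δ)) t < 0
  rw [deriv_hh]
  have d1 : HasDerivAt (fun t : ℝ => rexp (-(δ * (2 + δ) / 2) * t))
      (rexp (-(δ * (2 + δ) / 2) * t) * (-(δ * (2 + δ) / 2))) t := by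
    simpa using ((hasDerivAt_id t).const_mul (-(δ * (2 + δ) / 2))).exp
  have d2 : HasDerivAt (fun t : ℝ => rexp ((δ * (2 - δ) / 2) * t))
      (rexp ((δ * (2 - δ) / 2) * t) * (δ * (2 - δ) / 2)) t := by
    simpa using ((hasDerivAt_id t).const_mul (δ * (2 - δ) / 2)).exp
  have hd := ((d1.const_mul ((1 + δ) * (δ * (2 + δ) / 2))).sub
    (d2.const_mul ((1 - δ) * (δ * (2 - δ) / 2)))).deriv
  erw [hd]
  have p1 := Real.exp_pos (-(δ * (2 + δ) / 2) * t)
  have p2 := Real.exp_pos ((δ * (2 - δ) / 2) * t)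
  have hc1 : 0 < δ * (2 + δ) / 2 := by nlinarith
  have hc2 : 0 < δ * (2 - δ) / 2 := by nlinarith
  nlinarith [mul_pos (mul_pos (show (0:ℝ) < 1 + δ by linarith) (mul_pos hc1 hc1)) p1,
    mul_pos (mul_pos (sub_pos.mpr hδ1) (mul_pos hc2 hc2)) p2]

/-- The key inequality `(1-δ)(2-δ)e^{3δ} < (1+δ)(2+δ)` for `δ ∈ (0,1)`. -/
lemma F_ineq {δ : ℝ} (hδ0 : 0 < δ) (hδ1 : δ < 1) :
    (1 - δ) * (2 - δ) * rexp (3 * δ) < (1 + δ) * (2 + δ) := by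
  set F : ℝ → ℝ := fun d => Real.log (1 + d) + Real.log (2 + d)
    - Real.log (1 - d) - Real.log (2 - d) - 3 * d with hF
  have hmono : StrictMonoOn F (Set.Ico (0:ℝ) 1) := by
    refine strictMonoOn_of_deriv_pos (convex_Ico 0 1) ?_ ?_
    · have : ∀ d ∈ Set.Ico (0:ℝ) 1, (0:ℝ) < 1 + d ∧ (0:ℝ) < 2 + d ∧ (0:ℝ) < 1 - d ∧ (0:ℝ) < 2 - d := by
        rintro d ⟨h0, h1⟩; refine ⟨by linarith, by linarith, by linarith, by linarith⟩
      refine ContinuousOn.sub (ContinuousOn.sub (ContinuousOn.sub (ContinuousOn.add ?_ ?_) ?_) ?_)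
        (continuousOn_const.mul continuousOn_id)
      · exact (continuousOn_const.add continuousOn_id).log fun d hd => (this d hd).1.ne'
      · exact (continuousOn_const.add continuousOn_id).log fun d hd => (this d hd).2.1.ne'
      · exact (continuousOn_const.sub continuousOn_id).log fun d hd => (this d hd).2.2.1.ne'
      · exact (continuousOn_const.sub continuousOn_id).log fun d hd => (this d hd).2.2.2.ne'
    · intro d hd
      rw [interior_Ico] at hd
      obtain ⟨h0, h1⟩ := hd
      have p1 : (0:ℝ) < 1 + d := by linarith
      have p2 : (0:ℝ) < 2 + d := by linarith
      have p3 : (0:ℝ) < 1 - d := by linarith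
      have p4 : (0:ℝ) < 2 - d := by linarith
      have d1 : HasDerivAt (fun x : ℝ => Real.log (1 + x)) (1 / (1 + d)) d := by
        simpa using ((hasDerivAt_id d).const_add 1).log p1.ne'
      have d2 : HasDerivAt (fun x : ℝ => Real.log (2 + x)) (1 / (2 + d)) d := by
        simpa using ((hasDerivAt_id d).const_add 2).log p2.ne'
      have d3 : HasDerivAt (fun x : ℝ => Real.log (1 - x)) (-1 / (1 - d)) d := by
        simpa using ((hasDerivAt_id d).const_sub 1).log p3.ne'
      have d4 : HasDerivAt (fun x : ℝ => Real.log (2 - x)) (-1 / (2 - d)) d := by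
        simpa using ((hasDerivAt_id d).const_sub 2).log p4.ne'
      have dd : HasDerivAt F (1 / (1 + d) + 1 / (2 + d) - (-1 / (1 - d)) - (-1 / (2 - d)) - 3) d := by
        exact ((((d1.add d2).sub d3).sub d4).sub ((hasDerivAt_id d).const_mul 3)).congr_deriv (by ring)
      rw [dd.deriv]
      have e1 : 1 / (1 + d) + 1 / (1 - d) = 2 / (1 - d ^ 2) := by
        rw [div_add_div _ _ p1.ne' p3.ne']; congr 1 <;> ring
      have e2 : 1 / (2 + d) + 1 / (2 - d) = 4 / (4 - d ^ 2) := by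
        rw [div_add_div _ _ p2.ne' p4.ne']; congr 1 <;> ring
      have n1 : -1 / (1 - d) = -(1 / (1 - d)) := by ring
      have n2 : -1 / (2 - d) = -(1 / (2 - d)) := by ring
      have q1 : (2:ℝ) < 2 / (1 - d ^ 2) := by
        rw [lt_div_iff₀ (by nlinarith)]; nlinarith
      have q2 : (1:ℝ) < 4 / (4 - d ^ 2) := by
        rw [lt_div_iff₀ (by nlinarith)]; nlinarith
      rw [n1, n2]
      linarith [e1, e2, q1, q2]
  have hF0 : F 0 = 0 := by simp [hF]
  have hFδ : 0 < F δ := by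
    have := hmono (Set.mem_Ico.mpr ⟨le_refl 0, one_pos⟩) (Set.mem_Ico.mpr ⟨hδ0.le, hδ1⟩) hδ0
    rwa [hF0] at this
  have p1 : (0:ℝ) < 1 + δ := by linarith
  have p2 : (0:ℝ) < 2 + δ := by linarith
  have p3 : (0:ℝ) < 1 - δ := by linarith
  have p4 : (0:ℝ) < 2 - δ := by linarith
  have hlt : Real.log (1 - δ) + Real.log (2 - δ) + 3 * δ < Real.log (1 + δ) + Real.log (2 + δ) := by
    simp only [hF] at hFδ; linarith
  have := Real.exp_lt_exp.mpr hlt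
  rwa [Real.exp_add, Real.exp_add, Real.exp_log p3, Real.exp_log p4, Real.exp_add,
    Real.exp_log p1, Real.exp_log p2] at this

/-- `hh δ (3/2) > 0`. -/
lemma hh_pos_32 {δ : ℝ} (hδ0 : 0 < δ) (hδ1 : δ < 1) : 0 < hh δ (3 / 2) := by
  have hmono : StrictMonoOn (hh δ) (Set.Icc (0:ℝ) (3/2)) := by
    refine strictMonoOn_of_deriv_pos (convex_Icc 0 (3/2)) (continuous_hh δ).continuousOn ?_
    intro t ht
    rw [interior_Icc] at ht
    obtain ⟨ht0, ht1⟩ := ht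
    rw [(hasDerivAt_hh δ t).deriv]
    have key : (1 - δ) * (2 - δ) * rexp (2 * δ * t) < (1 + δ) * (2 + δ) := by
      have h1 : rexp (2 * δ * t) ≤ rexp (3 * δ) := by
        apply Real.exp_le_exp.mpr; nlinarith
      have h2 := F_ineq hδ0 hδ1
      have h3 : (0:ℝ) ≤ (1 - δ) * (2 - δ) := by nlinarith
      nlinarith [Real.exp_pos (2 * δ * t)]
    have hsplit : rexp ((δ * (2 - δ) / 2) * t)
        = rexp (-(δ * (2 + δ) / 2) * t) * rexp (2 * δ * t) := by
      rw [← Real.exp_add]; congr 1; ring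
    rw [hsplit]
    have hE := Real.exp_pos (-(δ * (2 + δ) / 2) * t)
    have h5 := mul_lt_mul_of_pos_right key hE
    nlinarith [mul_lt_mul_of_pos_left h5 (half_pos hδ0)]
  have h0 : hh δ 0 = 0 := by simp [hh]; ring
  have := hmono (Set.mem_Icc.mpr ⟨le_refl 0, by norm_num⟩)
    (Set.mem_Icc.mpr ⟨by norm_num, le_refl _⟩) (by norm_num)
  rwa [h0] at this

/-- `hh δ (2L) > 0` when `L = log(1/(1-δ)) > 3/4`. -/
lemma hh_pos_2L {δ : ℝ} (hδ0 : 0 < δ) (hδ1 : δ < 1)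
    (hL : 3 / 4 < Real.log (1 / (1 - δ))) :
    0 < hh δ (2 * Real.log (1 / (1 - δ))) := by
  set s : ℝ := 1 - δ with hs
  have hs0 : 0 < s := by simp [hs]; linarith
  have hs1 : s < 1 := by simp [hs]; linarith
  have hLs : Real.log (1 / (1 - δ)) = -Real.log s := by
    rw [one_div, Real.log_inv]
  rw [hLs] at hL ⊢
  have hlogs : Real.log s < -(3/4) := by linarith
  have hlogneg : Real.log s < 0 := by linarith
  -- rewrite the two exponentials
  have eA : -(δ * (2 + δ) / 2) * (2 * -Real.log s) = ((1 - s) * (3 - s)) * Real.log s := by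
    simp only [hs]; ring
  have eB : (δ * (2 - δ) / 2) * (2 * -Real.log s) = -((1 - s) * (1 + s)) * Real.log s := by
    simp only [hs]; ring
  have hAle : (1 + δ) * rexp (-(δ * (2 + δ) / 2) * (2 * -Real.log s)) < 1 := by
    rw [eA]
    have hshalf : s < 1/2 := by
      have h2 : Real.log s < Real.log (1/2) := by
        rw [one_div, Real.log_inv]
        have := Real.log_two_lt_d9
        linarith
      exact (Real.log_lt_log_iff hs0 (by norm_num)).mp h2
    have hcoef : (1:ℝ) ≤ (1 - s) * (3 - s) := by nlinarith
    have hexple : ((1 - s) * (3 - s)) * Real.log s ≤ 1 * Real.log s :=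
      mul_le_mul_of_nonpos_right hcoef hlogneg.le
    have hexp2 : rexp (((1 - s) * (3 - s)) * Real.log s) ≤ rexp (Real.log s) := by
      apply Real.exp_le_exp.mpr; linarith
    have hexp3 : rexp (Real.log s) = s := Real.exp_log hs0
    have h1δ : (1:ℝ) + δ < 2 := by linarith
    have hEpos := Real.exp_pos (((1 - s) * (3 - s)) * Real.log s)
    have hexp4 : rexp (((1 - s) * (3 - s)) * Real.log s) ≤ s := le_trans hexp2 (le_of_eq hexp3)
    calc (1 + δ) * rexp (((1 - s) * (3 - s)) * Real.log s)
        ≤ 2 * rexp (((1 - s) * (3 - s)) * Real.log s) := by nlinarith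
      _ ≤ 2 * s := by linarith
      _ < 1 := by linarith
  have hBlt : (1 - δ) * rexp ((δ * (2 - δ) / 2) * (2 * -Real.log s)) < 1 := by
    rw [eB, ← hs]
    have : s * rexp (-((1 - s) * (1 + s)) * Real.log s) = rexp ((s^2) * Real.log s) := by
      nth_rewrite 1 [← Real.exp_log hs0]
      rw [← Real.exp_add]; congr 1; ring
    rw [this]
    have : (s^2) * Real.log s < 0 := mul_neg_of_pos_of_neg (by positivity) hlogneg
    exact Real.exp_lt_one_iff.mpr this
  have hApos := Real.exp_pos (-(δ * (2 + δ) / 2) * (2 * -Real.log s))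
  unfold hh
  linarith

/-- `hh δ (43 + 2L) < 0`. -/
lemma hh_neg_T {δ : ℝ} (hδ0 : 0 < δ) (hδ1 : δ < 1) :
    hh δ (43 + 2 * Real.log (1 / (1 - δ))) < 0 := by
  set L : ℝ := Real.log (1 / (1 - δ)) with hLdef
  have hs0 : 0 < 1 - δ := by linarith
  have hL0 : 0 ≤ L := Real.log_nonneg (by rw [le_div_iff₀ hs0]; linarith)
  set T : ℝ := 43 + 2 * L with hT
  clear_value L
  have hT43 : 43 ≤ T := by rw [hT]; linarith
  have hTpos : 0 < T := by linarith
  clear_value T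
  unfold hh
  rcases le_or_gt δ (1/2) with hcase | hcase
  · -- small δ: Taylor lower bounds
    have h1 : (1 + δ) * (1 + -(δ * (2 + δ) / 2) * T) ≤ (1 + δ) * rexp (-(δ * (2 + δ) / 2) * T) := by
      have := Real.add_one_le_exp (-(δ * (2 + δ) / 2) * T)
      nlinarith
    have h2 : (1 - δ) * (1 + δ * (2 - δ) / 2 * T / 2) ^ 2 ≤ (1 - δ) * rexp (δ * (2 - δ) / 2 * T) := by
      have hsq : rexp (δ * (2 - δ) / 2 * T) = rexp (δ * (2 - δ) / 2 * T / 2) ^ 2 := by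
        rw [sq, ← Real.exp_add]; congr 1; ring
      have hb : 0 ≤ 1 + δ * (2 - δ) / 2 * T / 2 := by
        nlinarith [mul_pos (mul_pos hδ0 (show (0:ℝ) < 2 - δ by linarith)) hTpos]
      have hle := Real.add_one_le_exp (δ * (2 - δ) / 2 * T / 2)
      have hpow : (1 + δ * (2 - δ) / 2 * T / 2) ^ 2 ≤ rexp (δ * (2 - δ) / 2 * T / 2) ^ 2 :=
        pow_le_pow_left₀ hb (by linarith) 2
      rw [hsq]
      nlinarith
    have hfac : (9:ℝ)/8 ≤ (1 - δ) * (2 - δ) ^ 2 := by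
      nlinarith [mul_nonneg (sub_nonneg.mpr hcase) (sq_nonneg (δ - 9/4))]
    have h48 : 48 < (1 - δ) * (2 - δ) ^ 2 * T := by
      nlinarith [mul_le_mul hfac hT43 (by norm_num : (0:ℝ) ≤ 43) (by nlinarith)]
    have hexpand : (1 + δ) * (1 + -(δ * (2 + δ) / 2) * T) + (1 - δ) * (1 + δ * (2 - δ) / 2 * T / 2) ^ 2 - 2
        = δ ^ 2 * T * ((1 - δ) * (2 - δ) ^ 2 * T - 48) / 16 := by ring
    have hkey : 0 < δ ^ 2 * T * ((1 - δ) * (2 - δ) ^ 2 * T - 48) / 16 := by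
      have h0 : 0 < δ ^ 2 * T := by positivity
      have h' : 0 < (1 - δ) * (2 - δ) ^ 2 * T - 48 := by linarith
      have := mul_pos h0 h'
      linarith
    linarith
  · -- large δ: second term alone exceeds 2
    have hkey : 2 ≤ (1 - δ) * rexp (δ * (2 - δ) / 2 * T) := by
      have heq : (1 - δ) * rexp (δ * (2 - δ) / 2 * T)
          = rexp (Real.log (1 - δ) + δ * (2 - δ) / 2 * T) := by
        rw [Real.exp_add, Real.exp_log hs0]
      rw [heq]
      have hLlog : L = -Real.log (1 - δ) := by rw [hLdef, one_div, Real.log_inv]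
      have hexpo : Real.log (1 - δ) + δ * (2 - δ) / 2 * T
          = 43 * (δ * (2 - δ) / 2) - (1 - δ) ^ 2 * L := by
        rw [hT, hLlog]; ring
      have hslog : (1 - δ) ^ 2 * L ≤ 1 / 4 := by
        have h1 : L ≤ 1 / (1 - δ) - 1 := by
          rw [hLdef]
          have := Real.log_le_sub_one_of_pos (show (0:ℝ) < 1 / (1 - δ) by positivity)
          linarith
        have h2 : (1 - δ) ^ 2 * L ≤ (1 - δ) ^ 2 * (1 / (1 - δ) - 1) :=
          mul_le_mul_of_nonneg_left h1 (by positivity)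
        have h3 : (1 - δ) ^ 2 * (1 / (1 - δ) - 1) = (1 - δ) - (1 - δ) ^ 2 := by
          field_simp
        nlinarith
      have hc2big : 3 / 8 ≤ δ * (2 - δ) / 2 := by nlinarith
      have hfin : Real.log 2 ≤ Real.log (1 - δ) + δ * (2 - δ) / 2 * T := by
        rw [hexpo]
        have := Real.log_two_lt_d9
        linarith
      calc (2:ℝ) = rexp (Real.log 2) := (Real.exp_log (by norm_num)).symm
        _ ≤ _ := Real.exp_le_exp.mpr hfin
    have hApos : 0 < (1 + δ) * rexp (-(δ * (2 + δ) / 2) * T) :=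
      mul_pos (by linarith) (Real.exp_pos _)
    linarith


/-- Sign pattern of a strictly concave function vanishing at `0`. -/
lemma concave_sign {f : ℝ → ℝ} (hc : StrictConcaveOn ℝ Set.univ f) (hcont : Continuous f)
    (h0 : f 0 = 0) {a b : ℝ} (ha : 0 < a) (hab : a < b) (hfa : 0 < f a) (hfb : f b < 0) :
    ∃ t0, a < t0 ∧ t0 < b ∧ (∀ t, 0 < t → t < t0 → 0 < f t) ∧ (∀ t, t0 < t → f t < 0) := by
  obtain ⟨t0, ht0mem, ht0⟩ : ∃ t0 ∈ Set.Icc a b, f t0 = 0 := by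
    have hsub := intermediate_value_Icc' hab.le hcont.continuousOn
    have h0mem : (0:ℝ) ∈ Set.Icc (f b) (f a) := ⟨hfb.le, hfa.le⟩
    obtain ⟨t0, ht0mem, ht0⟩ := hsub h0mem
    exact ⟨t0, ht0mem, ht0⟩
  have hta : a < t0 := ht0mem.1.lt_of_ne (by rintro rfl; exact hfa.ne' ht0)
  have htb : t0 < b := ht0mem.2.lt_of_ne' (by rintro rfl; exact hfb.ne ht0)
  have ht0pos : 0 < t0 := ha.trans hta
  refine ⟨t0, hta, htb, ?_, ?_⟩
  · intro t htpos htlt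
    have l1 : 0 < (t0 - t) / t0 := div_pos (by linarith) ht0pos
    have l2 : 0 < t / t0 := div_pos htpos ht0pos
    have lsum : (t0 - t) / t0 + t / t0 = 1 := by field_simp; ring
    have hne : (0:ℝ) ≠ t0 := ht0pos.ne
    have hcc := hc.2 (Set.mem_univ 0) (Set.mem_univ t0) hne l1 l2 lsum
    simp only [smul_eq_mul, h0, ht0, mul_zero, zero_add, add_zero] at hcc
    rwa [div_mul_cancel₀ t ht0pos.ne'] at hcc
  · intro t htlt
    have htpos : 0 < t := ht0pos.trans htlt
    have l1 : 0 < (t - t0) / t := div_pos (by linarith) htpos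
    have l2 : 0 < t0 / t := div_pos ht0pos htpos
    have lsum : (t - t0) / t + t0 / t = 1 := by field_simp; ring
    have hne : (0:ℝ) ≠ t := htpos.ne
    have hcc := hc.2 (Set.mem_univ 0) (Set.mem_univ t) hne l1 l2 lsum
    simp only [smul_eq_mul, h0, mul_zero, zero_add] at hcc
    rw [div_mul_cancel₀ t0 htpos.ne', ht0] at hcc
    nlinarith


lemma hh_zero (δ : ℝ) : hh δ 0 = 0 := by simp [hh]; ring

theorem phi_unimodal :
    ∃ K0 : ℝ, 0 < K0 ∧ ∀ δ : ℝ, δ ∈ Set.Ioo (0 : ℝ) 1 →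
      ∃ x0 : ℝ,
        Real.sqrt (max (3/2) (2 * Real.log (1/(1-δ)))) < x0 ∧
        x0 < Real.sqrt (K0 + 2 * Real.log (1/(1-δ))) ∧
        StrictMonoOn (phi δ) (Set.Ioo 0 x0) ∧
        StrictAntiOn (phi δ) (Set.Ioi x0) := by
  refine ⟨43, by norm_num, ?_⟩
  rintro δ ⟨hδ0, hδ1⟩
  have hs0 : 0 < 1 - δ := by linarith
  have hL0 : 0 ≤ Real.log (1/(1-δ)) :=
    Real.log_nonneg (by rw [le_div_iff₀ hs0]; linarith)
  set L : ℝ := Real.log (1/(1-δ)) with hLdef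
  have ha : 0 < max (3/2 : ℝ) (2*L) := lt_of_lt_of_le (by norm_num) (le_max_left _ _)
  have hab : max (3/2 : ℝ) (2*L) < 43 + 2*L := max_lt (by linarith) (by linarith)
  have hfa : 0 < hh δ (max (3/2 : ℝ) (2*L)) := by
    rcases le_or_gt L (3/4 : ℝ) with h | h
    · rw [max_eq_left (by linarith : 2*L ≤ 3/2)]; exact hh_pos_32 hδ0 hδ1
    · rw [max_eq_right (by linarith : (3/2:ℝ) ≤ 2*L)]
      exact hh_pos_2L hδ0 hδ1 (by rw [← hLdef]; linarith)
  have hfb : hh δ (43 + 2*L) < 0 := hh_neg_T hδ0 hδ1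
  obtain ⟨t0, hta, htb, hpos, hneg⟩ :=
    concave_sign (strictConcaveOn_hh δ ⟨hδ0, hδ1⟩) (continuous_hh δ) (hh_zero δ) ha hab hfa hfb
  have ht0pos : 0 < t0 := ha.trans hta
  have hx0pos : 0 < Real.sqrt t0 := Real.sqrt_pos.mpr ht0pos
  have hx0sq : Real.sqrt t0 ^ 2 = t0 := Real.sq_sqrt ht0pos.le
  have hdiff : Differentiable ℝ (phi δ) := fun x => (hasDerivAt_phi δ x).differentiableAt
  have hcont : Continuous (phi δ) := hdiff.continuous
  refine ⟨Real.sqrt t0, Real.sqrt_lt_sqrt ha.le hta, Real.sqrt_lt_sqrt ht0pos.le htb, ?_, ?_⟩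
  · refine strictMonoOn_of_deriv_pos (convex_Ioo _ _) hcont.continuousOn ?_
    intro x hx
    rw [interior_Ioo] at hx
    obtain ⟨hx1, hx2⟩ := hx
    rw [(hasDerivAt_phi δ x).deriv, key_identity]
    refine mul_pos (gaussianPDFReal_pos 0 1 x one_ne_zero) ?_
    exact hpos _ (by positivity) (by nlinarith)
  · refine strictAntiOn_of_deriv_neg (convex_Ioi _) hcont.continuousOn ?_
    intro x hx
    rw [interior_Ioi] at hx
    have hx' : Real.sqrt t0 < x := hx
    rw [(hasDerivAt_phi δ x).deriv, key_identity]
    refine mul_neg_of_pos_of_neg (gaussianPDFReal_pos 0 1 x one_ne_zero) ?_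
    exact hneg _ (by nlinarith)
end

section
/- Under the Gaussian model setup, for every n ≥ 1, g_n = 2W Σ_{j : μ(j) > 0} μ(j) [2Φ(√n μ(j)/σ(j)) − Φ(√n (μ(j)+ε)/σ(j)) − Φ(√n (μ(j)−ε)/σ(j))], where Φ is the CDF of the standard normal distribution. -/
open Real MeasureTheory ProbabilityTheory Filter Topology

lemma measurable_realSign : Measurable Real.sign := by
  have h : Real.sign = fun x : ℝ => (Set.Ioi (0:ℝ)).indicator (fun _ => (1:ℝ)) x
      - (Set.Iio (0:ℝ)).indicator (fun _ => (1:ℝ)) x := by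
    ext x
    rcases lt_trichotomy x 0 with h | h | h
    · simp [Real.sign_of_neg h, Set.indicator_apply, not_lt.2 h.le, h]
    · simp [h, Real.sign_zero]
    · simp [Real.sign_of_pos h, Set.indicator_apply, h, not_lt.2 h.le]
  rw [h]
  exact ((measurable_const.indicator measurableSet_Ioi).sub
    (measurable_const.indicator measurableSet_Iio))

lemma map_eval_pi {ι : Type*} [Fintype ι] [DecidableEq ι] {α : ι → Type*} [∀ i, MeasurableSpace (α i)]
    (μ : ∀ i, Measure (α i)) [∀ i, IsProbabilityMeasure (μ i)] (i : ι) :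
    (Measure.pi μ).map (Function.eval i) = μ i := by
  ext s hs
  rw [Measure.map_apply (measurable_pi_apply i) hs]
  have he : Function.eval i ⁻¹' s
      = Set.univ.pi (Function.update (fun j => (Set.univ : Set (α j))) i s) := by
    ext x
    simp only [Set.mem_preimage, Set.mem_pi, Set.mem_univ, forall_true_left]
    constructor
    · intro hx j
      rcases eq_or_ne j i with rfl | hj
      · simpa using hx
      · simp [Function.update_of_ne hj]
    · intro hx
      simpa using hx i
  rw [he, Measure.pi_pi]
  rw [Finset.prod_eq_single i (fun j _ hj => by simp [Function.update_of_ne hj]) (by simp)]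
  simp


lemma gauss_singleton (m : ℝ) {v : NNReal} (hv : v ≠ 0) (x : ℝ) :
    gaussianReal m v {x} = 0 :=
  gaussianReal_absolutelyContinuous m hv (by simp)

lemma gauss_map (m s : ℝ) (hs : 0 < s) :
    gaussianReal m (Real.toNNReal (s ^ 2))
      = (gaussianReal 0 1).map (fun z => -s * z + m) := by
  have h1 : (gaussianReal 0 1).map (fun z => (-s) * z) = gaussianReal 0 (Real.toNNReal (s ^ 2)) := by
    rw [gaussianReal_map_const_mul (-s)]
    congr 1
    · ring
    · ext
      simp [Real.toNNReal, sq_nonneg, max_eq_left (sq_nonneg s)]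
  have h2 : ((gaussianReal 0 1).map (fun z => (-s) * z)).map (fun z => z + m)
      = (gaussianReal 0 1).map (fun z => -s * z + m) := by
    rw [Measure.map_map (by fun_prop) (by fun_prop)]
    rfl
  rw [← h2, h1, gaussianReal_map_add_const m, zero_add]

lemma gauss_Ioo (m s : ℝ) (hs : 0 < s) (a b : ℝ) (hab : a ≤ b) :
    ((gaussianReal m (Real.toNNReal (s ^ 2))) (Set.Ioo a b)).toReal
      = stdNormalCDF ((m - a) / s) - stdNormalCDF ((m - b) / s) := by
  rw [gauss_map m s hs, Measure.map_apply (by fun_prop) measurableSet_Ioo]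
  have hpre : (fun z => -s * z + m) ⁻¹' Set.Ioo a b = Set.Ioo ((m - b) / s) ((m - a) / s) := by
    ext z
    simp only [Set.mem_preimage, Set.mem_Ioo]
    constructor
    · rintro ⟨h1, h2⟩
      constructor
      · rw [div_lt_iff₀ hs]; nlinarith
      · rw [lt_div_iff₀ hs]; nlinarith
    · rintro ⟨h1, h2⟩
      rw [div_lt_iff₀ hs] at h1
      rw [lt_div_iff₀ hs] at h2
      constructor <;> nlinarith
  rw [hpre]
  set c := (m - b) / s
  set dd := (m - a) / s
  have hcd : c ≤ dd := (div_le_div_iff_of_pos_right hs).2 (by linarith)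
  have hIoo : (gaussianReal 0 1) (Set.Ioo c dd) = (gaussianReal 0 1) (Set.Ioc c dd) := by
    rcases lt_or_ge c dd with h | h
    · rw [← Set.Ioo_union_Icc_eq_Ioc h le_rfl, measure_union _ measurableSet_Icc]
      · simp [gauss_singleton 0 one_ne_zero]
      · rw [Set.Icc_self, Set.disjoint_singleton_right]
        simp
    · rw [Set.Ioo_eq_empty (by linarith), Set.Ioc_eq_empty (by linarith)]
  rw [hIoo]
  have : Set.Ioc c dd = Set.Iic dd \ Set.Iic c := by
    rw [Set.Iic_sdiff_Iic]
  rw [this, measure_diff (Set.Iic_subset_Iic.2 hcd) measurableSet_Iic.nullMeasurableSet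
    (measure_ne_top _ _), ENNReal.toReal_sub_of_le (measure_mono (Set.Iic_subset_Iic.2 hcd))
    (measure_ne_top _ _)]
  rw [stdNormalCDF, stdNormalCDF, cdf_eq_real, cdf_eq_real, measureReal_def, measureReal_def]

lemma gauss_ae_ne (m : ℝ) {v : NNReal} (hv : v ≠ 0) (a : ℝ) :
    ∀ᵐ x ∂(gaussianReal m v), x ≠ a := by
  rw [ae_iff]
  simpa using gauss_singleton m hv a

lemma onedim (m : ℝ) {v : NNReal} (hv : v ≠ 0) {ε : ℝ} (hε : 0 < ε) :
    ∫ x, (Real.sign x - Real.sign (x - ε * Real.sign x)) ∂(gaussianReal m v)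
      = 2 * ((gaussianReal m v) (Set.Ioo 0 ε)).toReal
        - 2 * ((gaussianReal m v) (Set.Ioo (-ε) 0)).toReal := by
  set ν := gaussianReal m v
  have key : ∀ x : ℝ, x ≠ -ε → x ≠ 0 → x ≠ ε →
      Real.sign x - Real.sign (x - ε * Real.sign x)
        = (Set.Ioo (0:ℝ) ε).indicator (fun _ => (2:ℝ)) x
          - (Set.Ioo (-ε) (0:ℝ)).indicator (fun _ => (2:ℝ)) x := by
    intro x h1 h2 h3
    rcases lt_trichotomy x 0 with hx | hx | hx
    · rw [Real.sign_of_neg hx, show x - ε * (-1) = x + ε by ring]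
      rcases lt_trichotomy x (-ε) with hx' | hx' | hx'
      · rw [Real.sign_of_neg (by linarith)]
        rw [Set.indicator_of_notMem (by simp [Set.mem_Ioo]; intro h; linarith),
          Set.indicator_of_notMem (by simp [Set.mem_Ioo]; intro h; linarith)]
        ring
      · exact absurd hx' h1
      · rw [Real.sign_of_pos (by linarith)]
        rw [Set.indicator_of_notMem (by simp [Set.mem_Ioo]; intro h; linarith),
          Set.indicator_of_mem (by simp [Set.mem_Ioo]; constructor <;> linarith)]
        ring
    · exact absurd hx h2
    · rw [Real.sign_of_pos hx, show x - ε * 1 = x - ε by ring]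
      rcases lt_trichotomy x ε with hx' | hx' | hx'
      · rw [Real.sign_of_neg (by linarith)]
        rw [Set.indicator_of_mem (by simp [Set.mem_Ioo]; constructor <;> linarith),
          Set.indicator_of_notMem (by simp [Set.mem_Ioo]; intro h; linarith)]
        ring
      · exact absurd hx' h3
      · rw [Real.sign_of_pos (by linarith)]
        rw [Set.indicator_of_notMem (by simp [Set.mem_Ioo]; intro h; linarith),
          Set.indicator_of_notMem (by simp [Set.mem_Ioo]; intro h; linarith)]
        ring
  have hae : (fun x => Real.sign x - Real.sign (x - ε * Real.sign x))
      =ᵐ[ν] fun x => (Set.Ioo (0:ℝ) ε).indicator (fun _ => (2:ℝ)) x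
          - (Set.Ioo (-ε) (0:ℝ)).indicator (fun _ => (2:ℝ)) x := by
    filter_upwards [gauss_ae_ne m hv (-ε), gauss_ae_ne m hv 0, gauss_ae_ne m hv ε] with x hx1 hx2 hx3
    exact key x hx1 hx2 hx3
  rw [integral_congr_ae hae, integral_sub
    ((integrable_const (2:ℝ)).indicator measurableSet_Ioo)
    ((integrable_const (2:ℝ)).indicator measurableSet_Ioo),
    integral_indicator_const _ measurableSet_Ioo, integral_indicator_const _ measurableSet_Ioo]
  simp [mul_comm]
  simp only [measureReal_def]

lemma abs_realSign_le (x : ℝ) : |Real.sign x| ≤ 1 := by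
  rcases lt_trichotomy x 0 with h | h | h <;>
    simp [Real.sign_of_neg, Real.sign_of_pos, h]

/-- Generalization gap `g_n = W · E[⟨sign(u) − sign(u − ε·sign(u)), μ⟩]` in the Gaussian
model, where `u` has independent coordinates `u(j) ~ N(μ(j), σ(j)²/n)`. -/
noncomputable def gaussGap (d : ℕ) (W ε : ℝ) (μ σ : Fin d → ℝ) (n : ℕ) : ℝ :=
  W * ∫ u : Fin d → ℝ,
      (∑ j, (Real.sign (u j) - Real.sign (u j - ε * Real.sign (u j))) * μ j)
    ∂(Measure.pi fun j => gaussianReal (μ j) (Real.toNNReal ((σ j) ^ 2 / n)))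

theorem gaussGap_formula (d : ℕ) (W ε : ℝ) (μ σ : Fin d → ℝ)
    (hW : 0 < W) (hε : 0 < ε) (hμ : ∀ j, 0 ≤ μ j) (hσ : ∀ j, 0 < σ j)
    (n : ℕ) (hn : 1 ≤ n) :
    gaussGap d W ε μ σ n
      = 2 * W * ∑ j ∈ Finset.univ.filter (fun j => 0 < μ j),
          μ j * (2 * stdNormalCDF (Real.sqrt n * μ j / σ j)
            - stdNormalCDF (Real.sqrt n * (μ j + ε) / σ j)
            - stdNormalCDF (Real.sqrt n * (μ j - ε) / σ j)) := by
  have hn0 : (0:ℝ) < n := by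
    have : (1:ℝ) ≤ n := by exact_mod_cast hn
    linarith
  have hv : ∀ j, Real.toNNReal (σ j ^ 2 / n) ≠ 0 := fun j =>
    (Real.toNNReal_pos.2 (div_pos (pow_pos (hσ j) 2) hn0)).ne'
  have hspos : ∀ j, 0 < σ j / Real.sqrt n := fun j => div_pos (hσ j) (Real.sqrt_pos.2 hn0)
  have hmeas : Measurable (fun x : ℝ => Real.sign x - Real.sign (x - ε * Real.sign x)) :=
    measurable_realSign.sub
      (measurable_realSign.comp (measurable_id.sub (measurable_const.mul measurable_realSign)))
  -- per-coordinate integral value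
  have hterm : ∀ j : Fin d,
      ∫ x, (Real.sign x - Real.sign (x - ε * Real.sign x))
        ∂(gaussianReal (μ j) (Real.toNNReal ((σ j) ^ 2 / n)))
      = 2 * (2 * stdNormalCDF (Real.sqrt n * μ j / σ j)
            - stdNormalCDF (Real.sqrt n * (μ j + ε) / σ j)
            - stdNormalCDF (Real.sqrt n * (μ j - ε) / σ j)) := by
    intro j
    have hσ' : σ j ≠ 0 := (hσ j).ne'
    have hs' : Real.sqrt n ≠ 0 := (Real.sqrt_pos.2 hn0).ne'
    have hsq : ((σ j / Real.sqrt n) ^ 2 : ℝ) = σ j ^ 2 / n := by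
      rw [div_pow, Real.sq_sqrt hn0.le]
    rw [onedim _ (hv j) hε, show Real.toNNReal ((σ j) ^ 2 / n)
        = Real.toNNReal ((σ j / Real.sqrt n) ^ 2) by rw [hsq],
      gauss_Ioo _ _ (hspos j) 0 ε hε.le, gauss_Ioo _ _ (hspos j) (-ε) 0 (by linarith)]
    have e1 : (μ j - 0) / (σ j / Real.sqrt n) = Real.sqrt n * μ j / σ j := by
      field_simp; ring
    have e2 : (μ j - ε) / (σ j / Real.sqrt n) = Real.sqrt n * (μ j - ε) / σ j := by
      field_simp
    have e3 : (μ j - -ε) / (σ j / Real.sqrt n) = Real.sqrt n * (μ j + ε) / σ j := by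
      field_simp; ring
    rw [e1, e2, e3]; ring
  -- integrability of each summand
  have hint : ∀ j : Fin d, Integrable
      (fun u : Fin d → ℝ => (Real.sign (u j) - Real.sign (u j - ε * Real.sign (u j))) * μ j)
      (Measure.pi fun j => gaussianReal (μ j) (Real.toNNReal ((σ j) ^ 2 / n))) := by
    intro j
    refine ⟨((hmeas.comp (measurable_pi_apply j)).mul_const _).aestronglyMeasurable,
      HasFiniteIntegral.of_bounded (C := 2 * |μ j|) (ae_of_all _ fun u => ?_)⟩
    rw [Real.norm_eq_abs, abs_mul]
    have h1 : |Real.sign (u j) - Real.sign (u j - ε * Real.sign (u j))| ≤ 2 := by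
      have a1 := abs_realSign_le (u j)
      have a2 := abs_realSign_le (u j - ε * Real.sign (u j))
      have a3 := abs_sub (Real.sign (u j)) (Real.sign (u j - ε * Real.sign (u j)))
      linarith
    exact mul_le_mul_of_nonneg_right h1 (abs_nonneg _)
  unfold gaussGap
  rw [integral_finset_sum _ (fun j _ => hint j)]
  -- marginalize each coordinate
  have hmarg : ∀ j : Fin d,
      (∫ u : Fin d → ℝ, (Real.sign (u j) - Real.sign (u j - ε * Real.sign (u j))) * μ j
        ∂(Measure.pi fun j => gaussianReal (μ j) (Real.toNNReal ((σ j) ^ 2 / n))))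
      = (∫ x, (Real.sign x - Real.sign (x - ε * Real.sign x))
          ∂(gaussianReal (μ j) (Real.toNNReal ((σ j) ^ 2 / n)))) * μ j := by
    intro j
    rw [← integral_mul_const]
    rw [← map_eval_pi (fun j => gaussianReal (μ j) (Real.toNNReal ((σ j) ^ 2 / n))) j,
      integral_map (measurable_pi_apply j).aemeasurable
        ((hmeas.mul_const _).aestronglyMeasurable)]
  simp only [hmarg, hterm]
  rw [Finset.sum_subset (s₁ := Finset.univ.filter fun j => 0 < μ j) (Finset.subset_univ _) (fun x _ hx => by
    have : μ x = 0 := le_antisymm (by simpa using hx) (hμ x)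
    simp [this])]
  rw [Finset.mul_sum, Finset.mul_sum]
  exact Finset.sum_congr rfl fun j _ => by ring
end

section
/- Consider one-dimensional linear regression with a single training point: let x₁ ~ N(0, 1) and δ ~ N(0, 1) be independent, let y₁ = w* x₁ + δ for a fixed w* ∈ ℝ, and fix ε > 0. Define the standard estimator w^std = y₁/x₁ and the robust estimator w^rob = y₁/x₁ if |x₁| ≥ ε and w^rob = 0 if |x₁| < ε. Then E[(w^std − w*)²] = +∞, while E[(w^rob − w*)²] ≤ (w*)² + 1/ε² < ∞; consequently the generalization gap g₁ = E[(w^rob − w*)²] − E[(w^std − w*)²] equals −∞. -/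
open Real MeasureTheory ProbabilityTheory
open scoped ENNReal

section Aux
open Set

lemma lint_inv_sq_top' : ∫⁻ x in Set.Ioc (0:ℝ) 1, ENNReal.ofReal (1/x^2) = ⊤ := by
  by_contra h
  have hm : Measurable fun x : ℝ => 1/x^2 := by measurability
  have hint : IntegrableOn (fun x : ℝ => 1/x^2) (Ioc 0 1) := by
    refine ⟨hm.aestronglyMeasurable.restrict, ?_⟩
    rw [hasFiniteIntegral_iff_ofReal]
    · exact lt_top_iff_ne_top.2 h
    · exact Filter.Eventually.of_forall fun x => by positivity
  have hint' : IntegrableOn (fun x : ℝ => x ^ (-2:ℝ)) (Ioo 0 1) := by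
    refine (hint.mono_set Ioo_subset_Ioc_self).congr_fun (fun x hx => ?_) measurableSet_Ioo
    rw [rpow_neg hx.1.le]; dsimp only; rw [one_div, ← rpow_natCast x 2]
    norm_num
  rw [intervalIntegral.integrableOn_Ioo_rpow_iff one_pos] at hint'
  norm_num at hint'

lemma mom2' : ∫ x : ℝ, x ^ 2 * rexp (-(1/2) * x ^ 2) = Real.sqrt (2 * π) := by
  have h := integral_rpow_mul_exp_neg_mul_rpow (p := 2) (q := 2) (b := 1/2)
    (by norm_num) (by norm_num) (by norm_num)
  have habs : ∫ x : ℝ, x ^ 2 * rexp (-(1/2) * x ^ 2)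
      = 2 * ∫ x in Ioi (0:ℝ), x ^ 2 * rexp (-(1/2) * x ^ 2) := by
    rw [← integral_comp_abs (f := fun x => x ^ 2 * rexp (-(1/2) * x ^ 2))]
    congr 1; ext x; rw [sq_abs]
  have hIoi : ∫ x in Ioi (0:ℝ), x ^ 2 * rexp (-(1/2) * x ^ 2)
      = ((1:ℝ)/2) ^ (-(2+1)/2 : ℝ) * (1/(2:ℝ)) * Real.Gamma ((2+1)/2) := by
    rw [← h]
    refine setIntegral_congr_fun measurableSet_Ioi fun x hx => ?_
    rw [show ((2:ℝ)) = ((2:ℕ):ℝ) by norm_num, Real.rpow_natCast]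
  rw [habs, hIoi]
  have hG : Real.Gamma ((2+1)/2 : ℝ) = (1/2) * Real.sqrt π := by
    have h32 : ((2+1)/2 : ℝ) = 1/2 + 1 := by norm_num
    rw [h32, Real.Gamma_add_one (by norm_num), Real.Gamma_one_half_eq]
  have hpow : ((1:ℝ)/2) ^ (-(2+1)/2 : ℝ) = 2 * Real.sqrt 2 := by
    have h0 : (-(2+1)/2 : ℝ) = -(1 + 1/2) := by norm_num
    have h1 : ((1:ℝ)/2) ^ (-(2+1)/2 : ℝ) = ((2:ℝ) ^ (-(1+1/2) : ℝ))⁻¹ := by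
      rw [h0, one_div, Real.inv_rpow (by norm_num)]
    rw [h1, ← Real.rpow_neg (by norm_num), neg_neg, Real.rpow_add (by norm_num),
      Real.rpow_one, ← Real.sqrt_eq_rpow]
  rw [hG, hpow, Real.sqrt_mul (by norm_num)]
  ring

lemma gauss_moment2' : ∫⁻ x, ENNReal.ofReal (x ^ 2) ∂(gaussianReal 0 1) = 1 := by
  rw [gaussianReal_of_var_ne_zero 0 one_ne_zero,
    lintegral_withDensity_eq_lintegral_mul _ (measurable_gaussianPDF 0 1)
      (by measurability)]
  have hpdf : ∀ x : ℝ, gaussianPDF 0 1 x * ENNReal.ofReal (x ^ 2)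
      = ENNReal.ofReal ((√(2 * π))⁻¹ * (x ^ 2 * rexp (-(1/2) * x ^ 2))) := by
    intro x
    rw [gaussianPDF, ← ENNReal.ofReal_mul (gaussianPDFReal_nonneg 0 1 x)]
    congr 1
    simp only [gaussianPDFReal, NNReal.coe_one, mul_one, sub_zero]
    rw [show -(1/2) * x^2 = -x^2/2 by ring]
    ring
  simp only [Pi.mul_apply]
  simp_rw [hpdf]
  rw [← ofReal_integral_eq_lintegral_ofReal]
  · rw [integral_const_mul, mom2', inv_mul_cancel₀ (by positivity), ENNReal.ofReal_one]
  · apply Integrable.const_mul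
    have := integrable_rpow_mul_exp_neg_mul_sq (b := 1/2) (by norm_num) (s := 2) (by norm_num)
    refine this.congr (Filter.Eventually.of_forall fun x => ?_)
    show x ^ (2:ℝ) * _ = _
    rw [show (2:ℝ) = ((2:ℕ):ℝ) by norm_num, Real.rpow_natCast]
  · exact Filter.Eventually.of_forall fun x => by positivity

lemma inner_top' (wstar : ℝ) {y : ℝ} (hy : y ≠ 0) :
    ∫⁻ x, ENNReal.ofReal (((wstar * x + y) / x - wstar) ^ 2) ∂(gaussianReal 0 1) = ⊤ := by
  set C : ℝ≥0∞ := ENNReal.ofReal ((√(2 * π))⁻¹ * rexp (-(1/2))) with hC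
  have hC0 : C ≠ 0 := by
    rw [hC, Ne, ENNReal.ofReal_eq_zero, not_le]
    positivity
  have key : ∫⁻ x in Ioc (0:ℝ) 1, ENNReal.ofReal ((y/x)^2) = ⊤ := by
    have hcong : ∫⁻ x in Ioc (0:ℝ) 1, ENNReal.ofReal ((y/x)^2)
        = ∫⁻ x in Ioc (0:ℝ) 1, ENNReal.ofReal (y^2) * ENNReal.ofReal (1/x^2) := by
      refine setLIntegral_congr_fun measurableSet_Ioc (
        fun x hx => ?_)
      rw [← ENNReal.ofReal_mul (sq_nonneg y)]
      congr 1
      rw [div_pow, one_div, div_eq_mul_inv]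
    rw [hcong, lintegral_const_mul _ (by measurability), lint_inv_sq_top',
      ENNReal.mul_top (by rw [Ne, ENNReal.ofReal_eq_zero, not_le]; positivity)]
  have hpdf : ∀ x ∈ Ioc (0:ℝ) 1, C ≤ gaussianPDF 0 1 x := by
    intro x hx
    rw [hC, gaussianPDF]
    apply ENNReal.ofReal_le_ofReal
    have : gaussianPDFReal 0 1 x = (√(2 * π))⁻¹ * rexp (-x^2/2) := by
      simp [gaussianPDFReal]
    rw [this]
    refine mul_le_mul_of_nonneg_left (exp_le_exp.2 ?_) (by positivity)
    nlinarith [hx.1, hx.2]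
  rw [← top_le_iff]
  calc ⊤ = C * ∫⁻ x in Ioc (0:ℝ) 1, ENNReal.ofReal ((y/x)^2) := by
        rw [key, ENNReal.mul_top hC0]
    _ = ∫⁻ x in Ioc (0:ℝ) 1, C * ENNReal.ofReal ((y/x)^2) := by
        rw [lintegral_const_mul (f := fun x => ENNReal.ofReal ((y/x)^2)) _ (((measurable_const.div measurable_id').pow_const 2).ennreal_ofReal)]
    _ ≤ ∫⁻ x in Ioc (0:ℝ) 1, gaussianPDF 0 1 x
          * ENNReal.ofReal (((wstar * x + y) / x - wstar) ^ 2) := by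
        refine setLIntegral_mono ((measurable_gaussianPDF 0 1).mul
          (((((measurable_const.mul measurable_id').add measurable_const).div
            measurable_id').sub measurable_const).pow_const 2).ennreal_ofReal) fun x hx => ?_
        have hx0 : x ≠ 0 := hx.1.ne'
        have heq : (wstar * x + y) / x - wstar = y / x := by field_simp; ring
        rw [heq]
        exact mul_le_mul' (hpdf x hx) le_rfl
    _ = ∫⁻ x in Ioc (0:ℝ) 1,
          ENNReal.ofReal (((wstar * x + y) / x - wstar) ^ 2) ∂(gaussianReal 0 1) := by
        rw [gaussianReal_of_var_ne_zero 0 one_ne_zero,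
          restrict_withDensity measurableSet_Ioc,
          lintegral_withDensity_eq_lintegral_mul _ (measurable_gaussianPDF 0 1)
            (g := fun x => ENNReal.ofReal (((wstar * x + y) / x - wstar) ^ 2)) ((((((measurable_const.mul measurable_id').add measurable_const).div
              measurable_id').sub measurable_const).pow_const 2).ennreal_ofReal)]
        rfl
    _ ≤ _ := setLIntegral_le_lintegral _ _

end Aux

/-- Joint law of `(x₁, δ)` with `x₁ ~ N(0,1)` and `δ ~ N(0,1)` independent. -/
noncomputable def gaussPair : Measure (ℝ × ℝ) :=
  (gaussianReal 0 1).prod (gaussianReal 0 1)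

/-- Standard estimator from one data point `(x₁, y₁)` with `y₁ = w* x₁ + δ`:
`w^std = y₁ / x₁`. -/
noncomputable def wStd1 (wstar : ℝ) (p : ℝ × ℝ) : ℝ := (wstar * p.1 + p.2) / p.1

/-- Robust estimator from one data point: `y₁/x₁` if `|x₁| ≥ ε`, else `0`. -/
noncomputable def wRob1 (wstar ε : ℝ) (p : ℝ × ℝ) : ℝ :=
  if ε ≤ |p.1| then (wstar * p.1 + p.2) / p.1 else 0

lemma std_top (wstar : ℝ) :
    ∫⁻ p, ENNReal.ofReal ((wStd1 wstar p - wstar) ^ 2) ∂gaussPair = ⊤ := by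
  have hmeas : Measurable fun p : ℝ × ℝ => ENNReal.ofReal ((wStd1 wstar p - wstar) ^ 2) := by
    unfold wStd1
    exact (((((measurable_const.mul measurable_fst).add measurable_snd).div
      measurable_fst).sub measurable_const).pow_const 2).ennreal_ofReal
  rw [gaussPair, lintegral_prod_symm _ hmeas.aemeasurable]
  have h0 : (gaussianReal 0 1) {(0:ℝ)} = 0 :=
    gaussianReal_absolutelyContinuous 0 one_ne_zero Real.volume_singleton
  have hae : ∀ᵐ y ∂(gaussianReal 0 1),
      (∫⁻ x, ENNReal.ofReal ((wStd1 wstar (x, y) - wstar) ^ 2) ∂(gaussianReal 0 1))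
        = (⊤ : ℝ≥0∞) := by
    refine ae_iff.2 (measure_mono_null (fun y hy => ?_) h0)
    simp only [Set.mem_setOf_eq] at hy
    by_contra hy0
    exact hy (inner_top' wstar hy0)
  rw [lintegral_congr_ae hae]
  simp

/-- With one Gaussian training point: `E[(w^std − w*)²] = ∞`,
`E[(w^rob − w*)²] ≤ (w*)² + 1/ε² < ∞`, hence the generalization gap
`g₁ = E[(w^rob − w*)²] − E[(w^std − w*)²] = −∞` (as extended reals). -/
theorem one_point_gaussian_regression (wstar ε : ℝ) (hε : 0 < ε) :
    (∫⁻ p, ENNReal.ofReal ((wStd1 wstar p - wstar) ^ 2) ∂gaussPair = ⊤) ∧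
    (∫⁻ p, ENNReal.ofReal ((wRob1 wstar ε p - wstar) ^ 2) ∂gaussPair
      ≤ ENNReal.ofReal (wstar ^ 2 + 1 / ε ^ 2)) ∧
    ((∫⁻ p, ENNReal.ofReal ((wRob1 wstar ε p - wstar) ^ 2) ∂gaussPair : ℝ≥0∞).toEReal
      - (∫⁻ p, ENNReal.ofReal ((wStd1 wstar p - wstar) ^ 2) ∂gaussPair : ℝ≥0∞).toEReal
      = ⊥) := by
  have hstd := std_top wstar
  have hrob : ∫⁻ p, ENNReal.ofReal ((wRob1 wstar ε p - wstar) ^ 2) ∂gaussPair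
      ≤ ENNReal.ofReal (wstar ^ 2 + 1 / ε ^ 2) := by
    have hpt : ∀ p : ℝ × ℝ, (wRob1 wstar ε p - wstar) ^ 2 ≤ wstar ^ 2 + 1/ε^2 * p.2 ^ 2 := by
      intro p
      unfold wRob1
      split_ifs with h
      · have hx0 : p.1 ≠ 0 := by
          intro h0
          rw [h0] at h
          simp at h
          linarith
        have heq : (wstar * p.1 + p.2) / p.1 - wstar = p.2 / p.1 := by field_simp; ring
        rw [heq, div_pow]
        have h1 : ε ^ 2 ≤ p.1 ^ 2 := by
          rw [← sq_abs p.1]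
          exact pow_le_pow_left₀ hε.le h 2
        have h2 : p.2 ^ 2 / p.1 ^ 2 ≤ p.2 ^ 2 / ε ^ 2 :=
          div_le_div_of_nonneg_left (sq_nonneg _) (by positivity) h1
        have h3 : p.2 ^ 2 / ε ^ 2 = 1/ε^2 * p.2 ^ 2 := by ring
        nlinarith [sq_nonneg wstar]
      · have : 0 ≤ 1/ε^2 * p.2 ^ 2 := by positivity
        nlinarith
    have hb : ∀ p : ℝ × ℝ, ENNReal.ofReal ((wRob1 wstar ε p - wstar) ^ 2)
        ≤ ENNReal.ofReal (wstar ^ 2) + ENNReal.ofReal (1/ε^2) * ENNReal.ofReal (p.2 ^ 2) := by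
      intro p
      rw [← ENNReal.ofReal_mul (by positivity), ← ENNReal.ofReal_add (by positivity)
        (by positivity)]
      exact ENNReal.ofReal_le_ofReal (hpt p)
    calc ∫⁻ p, ENNReal.ofReal ((wRob1 wstar ε p - wstar) ^ 2) ∂gaussPair
        ≤ ∫⁻ p : ℝ × ℝ, (ENNReal.ofReal (wstar ^ 2)
            + ENNReal.ofReal (1/ε^2) * ENNReal.ofReal (p.2 ^ 2)) ∂gaussPair :=
          lintegral_mono hb
      _ = ENNReal.ofReal (wstar ^ 2)
            + ENNReal.ofReal (1/ε^2) * ∫⁻ p : ℝ × ℝ, ENNReal.ofReal (p.2 ^ 2) ∂gaussPair := by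
          rw [lintegral_add_left measurable_const, lintegral_const,
            lintegral_const_mul _ ((measurable_snd.pow_const 2).ennreal_ofReal)]
          have : gaussPair Set.univ = 1 := by
            rw [gaussPair]
            exact measure_univ
          rw [this, mul_one]
      _ = ENNReal.ofReal (wstar ^ 2) + ENNReal.ofReal (1/ε^2) * 1 := by
          congr 1
          congr 1
          rw [gaussPair, lintegral_prod_symm _
            ((measurable_snd.pow_const 2).ennreal_ofReal).aemeasurable]
          simp only [lintegral_const, measure_univ, mul_one]
          exact gauss_moment2'
      _ = ENNReal.ofReal (wstar ^ 2 + 1 / ε ^ 2) := by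
          rw [mul_one, ← ENNReal.ofReal_add (by positivity) (by positivity)]
  refine ⟨hstd, hrob, ?_⟩
  rw [hstd]
  rw [show ((⊤:ℝ≥0∞).toEReal) = (⊤:EReal) from rfl]
  exact EReal.sub_top _
end

section
/- Consider one-dimensional linear regression with a single training point: let λ > 0, let x₁ = Z + 1 with Z ~ Poisson(λ), let δ ~ N(0, 1) be independent of x₁, let y₁ = w* x₁ + δ for a fixed w* ∈ ℝ with |w*| ≥ 1, and let ε ≥ 0. Define w^std = y₁/x₁ and w^rob = y₁/x₁ if x₁ ≥ ε and w^rob = 0 if x₁ < ε. Then the generalization gap g₁ = (E[(w^rob − w*)²] − E[(w^std − w*)²]) · E[x₁²] equals E[x₁²] · Σ_{integers k with 1 ≤ k < ε} P[x₁ = k] · ((w*)² − 1/k²); in particular, g₁ is non-negative, finite (bounded above by E[x₁²] · (w*)²), nondecreasing as a function of ε, and equal to 0 whenever 0 ≤ ε ≤ 1. -/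
open Real MeasureTheory ProbabilityTheory
open scoped NNReal

/-- Joint law of `(Z, δ)` with `Z ~ Poisson(λ)` and `δ ~ N(0,1)` independent;
the input is `x₁ = Z + 1`. -/
noncomputable def poisPair (lam : ℝ≥0) : Measure (ℕ × ℝ) :=
  (poissonMeasure lam).prod (gaussianReal 0 1)

/-- Standard estimator from one data point `(x₁, y₁)` with `x₁ = Z + 1` and
`y₁ = w* x₁ + δ`: `w^std = y₁ / x₁`. -/
noncomputable def wStdP (wstar : ℝ) (p : ℕ × ℝ) : ℝ :=
  (wstar * ((p.1 : ℝ) + 1) + p.2) / ((p.1 : ℝ) + 1)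

/-- Robust estimator from one data point: `y₁/x₁` if `x₁ ≥ ε`, else `0`. -/
noncomputable def wRobP (wstar ε : ℝ) (p : ℕ × ℝ) : ℝ :=
  if ε ≤ (p.1 : ℝ) + 1 then (wstar * ((p.1 : ℝ) + 1) + p.2) / ((p.1 : ℝ) + 1) else 0

/-- The generalization gap with one training point,
`g₁(ε) = (E[(w^rob − w*)²] − E[(w^std − w*)²]) · E[x₁²]`. -/
noncomputable def poisGap (lam : ℝ≥0) (wstar ε : ℝ) : ℝ :=
  ((∫ p, (wRobP wstar ε p - wstar) ^ 2 ∂(poisPair lam))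
      - ∫ p, (wStdP wstar p - wstar) ^ 2 ∂(poisPair lam))
    * ∫ z, ((z : ℝ) + 1) ^ 2 ∂(poissonMeasure lam)

open scoped ENNReal

lemma sq_rpow' (x : ℝ) : x ^ (2:ℝ) = x ^ 2 := by
  rw [show (2:ℝ) = ((2:ℕ):ℝ) by norm_num, Real.rpow_natCast]

lemma integrable_sq_exp : Integrable (fun x : ℝ => x ^ 2 * rexp (-(2⁻¹:ℝ) * x ^ 2)) := by
  have := integrable_rpow_mul_exp_neg_mul_sq (b := 2⁻¹) (by norm_num) (s := 2) (by norm_num)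
  simpa [sq_rpow'] using this

lemma integral_sq_exp : ∫ x : ℝ, x ^ 2 * rexp (-(2⁻¹:ℝ) * x ^ 2) = Real.sqrt (2 * π) := by
  set f : ℝ → ℝ := fun x => x ^ 2 * rexp (-(2⁻¹:ℝ) * x ^ 2) with hf
  have h1 : ∫ x in Set.Ioi (0:ℝ), f x = Real.sqrt (2 * π) / 2 := by
    have h0 := integral_rpow_mul_exp_neg_mul_rpow (p := 2) (q := 2) (b := 2⁻¹)
      (by norm_num) (by norm_num) (by norm_num)
    simp only [sq_rpow'] at h0
    rw [hf, h0]
    rw [show (-((2:ℝ)+1)/2) = -(3/2) by norm_num,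
        show ((2:ℝ)+1)/2 = 1/2 + 1 by norm_num,
        Real.Gamma_add_one (by norm_num), Real.Gamma_one_half_eq,
        Real.inv_rpow (by norm_num), ← Real.rpow_neg (by norm_num), neg_neg,
        show (3/2:ℝ) = 1 + 1/2 by norm_num, Real.rpow_add (by norm_num), Real.rpow_one,
        ← Real.sqrt_eq_rpow, Real.sqrt_mul (by norm_num : (0:ℝ) ≤ 2)]
    ring
  have h2 : ∫ x in Set.Iic (0:ℝ), f x = ∫ x in Set.Ioi (0:ℝ), f x := by
    rw [show (0:ℝ) = -0 by norm_num, ← integral_comp_neg_Ioi (f := f) (c := 0)]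
    have : (fun x => f (-x)) = f := by funext x; simp [hf]
    rw [this]; norm_num
  have h3 := integral_add_compl (measurableSet_Ioi (a := (0:ℝ))) integrable_sq_exp
  rw [Set.compl_Ioi] at h3
  rw [← hf] at h3
  rw [← h3, h2, h1]; ring

lemma gaussianReal_eq' : gaussianReal 0 1
    = (volume : Measure ℝ).withDensity fun x => ((gaussianPDFReal 0 1 x).toNNReal : ℝ≥0∞) := by
  rw [gaussianReal_of_var_ne_zero _ one_ne_zero]
  rfl

lemma pdf_smul_eq (x : ℝ) : ((gaussianPDFReal 0 1 x).toNNReal : ℝ≥0) • (x ^ 2)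
    = (Real.sqrt (2 * π))⁻¹ * (x ^ 2 * rexp (-(2⁻¹:ℝ) * x ^ 2)) := by
  rw [NNReal.smul_def, smul_eq_mul, Real.coe_toNNReal _ (gaussianPDFReal_nonneg 0 1 x)]
  simp only [gaussianPDFReal, NNReal.coe_one, mul_one, sub_zero]
  rw [show -x ^ 2 / 2 = -(2⁻¹:ℝ) * x ^ 2 by ring]
  ring

lemma integrable_sq_gaussian : Integrable (fun x : ℝ => x ^ 2) (gaussianReal 0 1) := by
  rw [gaussianReal_eq',
    integrable_withDensity_iff_integrable_smul (measurable_gaussianPDFReal 0 1).real_toNNReal]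
  have : (fun x : ℝ => ((gaussianPDFReal 0 1 x).toNNReal : ℝ≥0) • (x ^ 2))
      = fun x => (Real.sqrt (2 * π))⁻¹ * (x ^ 2 * rexp (-(2⁻¹:ℝ) * x ^ 2)) :=
    funext pdf_smul_eq
  rw [this]
  exact integrable_sq_exp.const_mul _

lemma integral_sq_gaussian : ∫ x, x ^ 2 ∂(gaussianReal 0 1) = 1 := by
  rw [gaussianReal_eq',
    integral_withDensity_eq_integral_smul (measurable_gaussianPDFReal 0 1).real_toNNReal]
  simp_rw [pdf_smul_eq]
  rw [integral_const_mul, integral_sq_exp, inv_mul_cancel₀]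
  positivity

lemma measurable_nat {α : Type*} [MeasurableSpace α] (f : ℕ → α) : Measurable f :=
  measurable_from_top

lemma intb (lam : ℝ≥0) (F : ℕ → ℝ) (C : ℝ) (hC : ∀ z, |F z| ≤ C) :
    Integrable F (poissonMeasure lam) :=
  Integrable.mono' (integrable_const C) (measurable_nat F).aestronglyMeasurable
    (Filter.Eventually.of_forall fun z => hC z)

lemma poissonPMF_toReal (lam : ℝ≥0) (z : ℕ) :
    (poissonPMF lam z).toReal = poissonPMFReal lam z := by
  have : poissonPMF lam z = ENNReal.ofReal (poissonPMFReal lam z) := rfl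
  rw [this, ENNReal.toReal_ofReal poissonPMFReal_nonneg]

lemma diff_eq (lam : ℝ≥0) (wstar ε : ℝ) :
    (∫ p, (wRobP wstar ε p - wstar) ^ 2 ∂(poisPair lam))
      - ∫ p, (wStdP wstar p - wstar) ^ 2 ∂(poisPair lam)
    = ∑ k ∈ Finset.Ico 1 ⌈ε⌉₊,
        poissonPMFReal lam (k - 1) * (wstar ^ 2 - 1 / (k : ℝ) ^ 2) := by
  classical
  set q : ℕ → ℝ := fun z => 1 / ((z : ℝ) + 1) ^ 2 with hq
  set f : ℕ → ℝ := fun z => if ε ≤ (z : ℝ) + 1 then q z else 0 with hf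
  set h : ℕ → ℝ := fun z => if ε ≤ (z : ℝ) + 1 then 0 else wstar ^ 2 with hh
  have hz1 : ∀ z : ℕ, ((z : ℝ) + 1) ≠ 0 := fun z => by positivity
  have hqb : ∀ z, |q z| ≤ 1 := by
    intro z
    rw [hq, abs_of_nonneg (by positivity)]
    rw [div_le_one (by positivity)]
    nlinarith [Nat.cast_nonneg (α := ℝ) z]
  have hfb : ∀ z, |f z| ≤ 1 := by
    intro z; rw [hf]; dsimp only
    split
    · exact hqb z
    · simp
  have hhb : ∀ z, |h z| ≤ wstar ^ 2 := by
    intro z; rw [hh]; dsimp only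
    split
    · simp; positivity
    · rw [abs_of_nonneg (by positivity)]
  have hqi := intb lam q 1 hqb
  have hfi := intb lam f 1 hfb
  have hhi := intb lam h (wstar ^ 2) hhb
  -- standard estimator integral
  have hE1 : ∫ p, (wStdP wstar p - wstar) ^ 2 ∂(poisPair lam)
      = ∫ z, q z ∂(poissonMeasure lam) := by
    have hpt : ∀ p : ℕ × ℝ, (wStdP wstar p - wstar) ^ 2 = q p.1 * p.2 ^ 2 := by
      intro p
      rw [wStdP, hq]
      dsimp only
      field_simp
      ring
    calc ∫ p, (wStdP wstar p - wstar) ^ 2 ∂(poisPair lam)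
        = ∫ p : ℕ × ℝ, q p.1 * p.2 ^ 2 ∂(poisPair lam) :=
          integral_congr_ae (Filter.Eventually.of_forall hpt)
      _ = (∫ z, q z ∂(poissonMeasure lam)) * ∫ x, x ^ 2 ∂(gaussianReal 0 1) := by
          rw [poisPair]; exact integral_prod_mul q (fun x : ℝ => x ^ 2)
      _ = ∫ z, q z ∂(poissonMeasure lam) := by rw [integral_sq_gaussian, mul_one]
  -- robust estimator integral
  have hE2 : ∫ p, (wRobP wstar ε p - wstar) ^ 2 ∂(poisPair lam)
      = (∫ z, f z ∂(poissonMeasure lam)) + ∫ z, h z ∂(poissonMeasure lam) := by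
    have hpt : ∀ p : ℕ × ℝ, (wRobP wstar ε p - wstar) ^ 2 = f p.1 * p.2 ^ 2 + h p.1 * 1 := by
      intro p
      rw [wRobP, hf, hh, hq]
      dsimp only
      by_cases hc : ε ≤ (p.1 : ℝ) + 1
      · rw [if_pos hc, if_pos hc, if_pos hc]
        field_simp
        ring
      · rw [if_neg hc, if_neg hc, if_neg hc]
        ring
    calc ∫ p, (wRobP wstar ε p - wstar) ^ 2 ∂(poisPair lam)
        = ∫ p : ℕ × ℝ, (f p.1 * p.2 ^ 2 + h p.1 * 1) ∂(poisPair lam) :=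
          integral_congr_ae (Filter.Eventually.of_forall hpt)
      _ = (∫ p : ℕ × ℝ, f p.1 * p.2 ^ 2 ∂(poisPair lam))
            + ∫ p : ℕ × ℝ, h p.1 * (1:ℝ) ∂(poisPair lam) := by
          rw [poisPair]
          exact integral_add (hfi.mul_prod integrable_sq_gaussian)
            (hhi.mul_prod (integrable_const 1))
      _ = (∫ z, f z ∂(poissonMeasure lam)) * (∫ x, x ^ 2 ∂(gaussianReal 0 1))
            + (∫ z, h z ∂(poissonMeasure lam)) * (∫ _ : ℝ, (1:ℝ) ∂(gaussianReal 0 1)) := by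
          rw [poisPair, integral_prod_mul f (fun x : ℝ => x ^ 2), integral_prod_mul h (fun _ : ℝ => (1:ℝ))]
      _ = (∫ z, f z ∂(poissonMeasure lam)) + ∫ z, h z ∂(poissonMeasure lam) := by
          rw [integral_sq_gaussian]
          simp
  rw [hE1, hE2]
  -- combine into a single integral
  set g : ℕ → ℝ := fun z => if ε ≤ (z : ℝ) + 1 then 0 else wstar ^ 2 - q z with hg
  have h4 : Integrable (fun z => f z + h z) (poissonMeasure lam) := hfi.add hhi
  have hcomb : (∫ z, f z ∂(poissonMeasure lam)) + (∫ z, h z ∂(poissonMeasure lam))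
      - ∫ z, q z ∂(poissonMeasure lam) = ∫ z, g z ∂(poissonMeasure lam) := by
    rw [← integral_add hfi hhi, ← integral_sub h4 hqi]
    refine integral_congr_ae (Filter.Eventually.of_forall fun z => ?_)
    rw [hf, hh, hg]
    dsimp only
    by_cases hc : ε ≤ (z : ℝ) + 1
    · rw [if_pos hc, if_pos hc, if_pos hc]; ring
    · rw [if_neg hc, if_neg hc, if_neg hc]; ring
  rw [hcomb]
  -- evaluate the discrete integral
  have hgb : ∀ z, |g z| ≤ wstar ^ 2 + 1 := by
    intro z; rw [hg]; dsimp only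
    split
    · simp; positivity
    · calc |wstar ^ 2 - q z| ≤ |wstar ^ 2| + |q z| := abs_sub _ _
        _ ≤ wstar ^ 2 + 1 := by
            have := hqb z
            rw [abs_of_nonneg (by positivity : (0:ℝ) ≤ wstar ^ 2)]
            linarith
  have hgi : Integrable g (poissonMeasure lam) := intb lam g _ hgb
  have htsum : ∫ z, g z ∂(poissonMeasure lam) = ∑' z : ℕ, (poissonPMF lam z).toReal • g z := by
    rw [← (hasSum_integral_poissonMeasure hgi).tsum_eq]
    congr 1 with z
    rw [poissonPMF_toReal]; rfl
  have hvanish : ∀ z ∉ Finset.range (⌈ε⌉₊ - 1), (poissonPMF lam z).toReal • g z = 0 := by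
    intro z hz
    rw [Finset.mem_range, not_lt] at hz
    have hzm : ⌈ε⌉₊ ≤ z + 1 := by omega
    have hcz : ε ≤ (z : ℝ) + 1 := by
      refine le_trans (Nat.le_ceil ε) ?_
      have : ((⌈ε⌉₊ : ℕ) : ℝ) ≤ ((z + 1 : ℕ) : ℝ) := Nat.cast_le.mpr hzm
      push_cast at this ⊢
      linarith
    rw [hg]; dsimp only; rw [if_pos hcz, smul_zero]
  rw [htsum, tsum_eq_sum hvanish, Finset.sum_Ico_eq_sum_range]
  refine Finset.sum_congr rfl fun j hj => ?_
  rw [Finset.mem_range] at hj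
  have hjlt : (j + 1 : ℕ) < ⌈ε⌉₊ := by omega
  have hcond : ¬ ε ≤ (j : ℝ) + 1 := by
    have := Nat.lt_ceil.mp hjlt
    push_cast at this
    linarith
  rw [poissonPMF_toReal, smul_eq_mul, hg]
  dsimp only
  rw [if_neg hcond, hq]
  dsimp only
  have hidx : (1 + j - 1 : ℕ) = j := by omega
  rw [hidx]
  push_cast
  ring


/-- With one shifted-Poisson training point: the generalization gap equals
`E[x₁²] · Σ_{1 ≤ k < ε} P[x₁ = k]((w*)² − 1/k²)`; it is non-negative, bounded above by
`E[x₁²]·(w*)²` (hence finite), nondecreasing in `ε`, and zero for `0 ≤ ε ≤ 1`. -/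
theorem one_point_poisson_regression (lam : ℝ≥0) (hlam : 0 < lam)
    (wstar : ℝ) (hw : 1 ≤ |wstar|) (ε : ℝ) (hε : 0 ≤ ε) :
    (poisGap lam wstar ε
      = (∫ z, ((z : ℝ) + 1) ^ 2 ∂(poissonMeasure lam))
        * ∑ k ∈ Finset.Ico 1 ⌈ε⌉₊,
            poissonPMFReal lam (k - 1) * (wstar ^ 2 - 1 / (k : ℝ) ^ 2)) ∧
    0 ≤ poisGap lam wstar ε ∧
    poisGap lam wstar ε
      ≤ (∫ z, ((z : ℝ) + 1) ^ 2 ∂(poissonMeasure lam)) * wstar ^ 2 ∧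
    (∀ ε₁ ε₂ : ℝ, 0 ≤ ε₁ → ε₁ ≤ ε₂ → poisGap lam wstar ε₁ ≤ poisGap lam wstar ε₂) ∧
    (∀ e : ℝ, 0 ≤ e → e ≤ 1 → poisGap lam wstar e = 0) := by

  set Ex2 : ℝ := ∫ z, ((z : ℝ) + 1) ^ 2 ∂(poissonMeasure lam) with hEx2def
  set S : ℕ → ℝ := fun m => ∑ k ∈ Finset.Ico 1 m,
    poissonPMFReal lam (k - 1) * (wstar ^ 2 - 1 / (k : ℝ) ^ 2) with hSdef
  have hEx2 : 0 ≤ Ex2 := integral_nonneg fun z => sq_nonneg _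
  have hw2 : 1 ≤ wstar ^ 2 := by nlinarith [abs_nonneg wstar, sq_abs wstar]
  have hterm : ∀ k : ℕ, k ∈ Finset.Ico 1 (⌈ε⌉₊) ∨ 1 ≤ k →
      0 ≤ poissonPMFReal lam (k - 1) * (wstar ^ 2 - 1 / (k : ℝ) ^ 2) := by
    intro k hk
    have hk1 : 1 ≤ k := by
      rcases hk with hk | hk
      · exact (Finset.mem_Ico.mp hk).1
      · exact hk
    have hk1' : (1 : ℝ) ≤ (k : ℝ) := by exact_mod_cast hk1
    have : 1 / (k : ℝ) ^ 2 ≤ 1 := by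
      rw [div_le_one (by positivity)]
      nlinarith
    exact mul_nonneg poissonPMFReal_nonneg (by linarith)
  have htermnn : ∀ k : ℕ, 1 ≤ k →
      0 ≤ poissonPMFReal lam (k - 1) * (wstar ^ 2 - 1 / (k : ℝ) ^ 2) :=
    fun k hk => hterm k (Or.inr hk)
  have hSnn : ∀ m, 0 ≤ S m := by
    intro m
    refine Finset.sum_nonneg fun k hk => htermnn k (Finset.mem_Ico.mp hk).1
  have hSmono : ∀ m₁ m₂, m₁ ≤ m₂ → S m₁ ≤ S m₂ := by
    intro m₁ m₂ hm
    refine Finset.sum_le_sum_of_subset_of_nonneg (Finset.Ico_subset_Ico le_rfl hm)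
      fun k hk _ => htermnn k (Finset.mem_Ico.mp hk).1
  have hSle : ∀ m, S m ≤ wstar ^ 2 := by
    intro m
    have h1 : S m ≤ ∑ k ∈ Finset.Ico 1 m, poissonPMFReal lam (k - 1) * wstar ^ 2 := by
      refine Finset.sum_le_sum fun k hk => ?_
      have hk1 : 1 ≤ k := (Finset.mem_Ico.mp hk).1
      have hk1' : (1 : ℝ) ≤ (k : ℝ) := by exact_mod_cast hk1
      refine mul_le_mul_of_nonneg_left ?_ poissonPMFReal_nonneg
      have : 0 ≤ 1 / (k : ℝ) ^ 2 := by positivity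
      linarith
    have h2 : ∑ k ∈ Finset.Ico 1 m, poissonPMFReal lam (k - 1) * wstar ^ 2
        = (∑ j ∈ Finset.range (m - 1), poissonPMFReal lam j) * wstar ^ 2 := by
      rw [Finset.sum_Ico_eq_sum_range, Finset.sum_mul]
      refine Finset.sum_congr rfl fun j _ => ?_
      congr 2
      omega
    have h3 : ∑ j ∈ Finset.range (m - 1), poissonPMFReal lam j ≤ 1 :=
      sum_le_hasSum _ (fun j _ => poissonPMFReal_nonneg) (poissonPMFRealSum lam)
    calc S m ≤ (∑ j ∈ Finset.range (m - 1), poissonPMFReal lam j) * wstar ^ 2 := by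
          rw [← h2]; exact h1
      _ ≤ 1 * wstar ^ 2 := by nlinarith
      _ = wstar ^ 2 := one_mul _
  have hgap : ∀ e : ℝ, poisGap lam wstar e = Ex2 * S ⌈e⌉₊ := by
    intro e
    rw [poisGap, diff_eq, hSdef, hEx2def]
    ring
  refine ⟨hgap ε, ?_, ?_, ?_, ?_⟩
  · rw [hgap ε]; exact mul_nonneg hEx2 (hSnn _)
  · rw [hgap ε]; exact mul_le_mul_of_nonneg_left (hSle _) hEx2
  · intro ε₁ ε₂ h1 h2
    rw [hgap ε₁, hgap ε₂]
    exact mul_le_mul_of_nonneg_left (hSmono _ _ (Nat.ceil_mono h2)) hEx2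
  · intro e he0 he1
    rw [hgap e]
    have hm : ⌈e⌉₊ ≤ 1 := by
      rw [Nat.ceil_le]
      exact_mod_cast he1
    have : Finset.Ico 1 ⌈e⌉₊ = ∅ := Finset.Ico_eq_empty (by omega)
    rw [hSdef]
    dsimp only
    rw [this, Finset.sum_empty, mul_zero]
end
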